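/- Let f be a real polynomial of degree n ≥ 2 all of whose complex roots are real. Then f is trivial, i.e. of the form a(X - b)^n for some real a ≠ 0 and b, if and only if the (n-2)nd derivative f^{(n-2)} has a double root, i.e. there exists c with f^{(n-2)}(c) = 0 and f^{(n-1)}(c) = 0. -/

import Mathlib

open Polynomial Multiset

private lemma esymm_cons' (a : ℝ) (s : Multiset ℝ) (k : ℕ) :
    (a ::ₘ s).esymm (k + 1) = s.esymm (k + 1) + a * s.esymm k := by
  simp only [Multiset.esymm, Multiset.powersetCard_cons, Multiset.map_add, Multiset.sum_add,
    Multiset.map_map, Function.comp_def, Multiset.prod_cons]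
  rw [← Multiset.sum_map_mul_left]

private lemma esymm_one'' (s : Multiset ℝ) : s.esymm 1 = s.sum := by
  simp [Multiset.esymm, Multiset.powersetCard_one, Multiset.map_map]

private lemma sq_sum_eq' (s : Multiset ℝ) :
    s.sum ^ 2 = (s.map (· ^ 2)).sum + 2 * s.esymm 2 := by
  induction s using Multiset.induction with
  | empty => simp [Multiset.esymm, Multiset.powersetCard_zero_right]
  | cons a s ih =>
    rw [Multiset.sum_cons, Multiset.map_cons, Multiset.sum_cons,
      show (2 : ℕ) = 1 + 1 from rfl, esymm_cons', esymm_one'']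
    ring_nf
    ring_nf at ih
    nlinarith [ih]

private lemma sum_sq_sub' (s : Multiset ℝ) (c : ℝ) :
    (s.map fun r => (r - c) ^ 2).sum =
      (s.map (· ^ 2)).sum - 2 * c * s.sum + (Multiset.card s : ℝ) * c ^ 2 := by
  induction s using Multiset.induction with
  | empty => simp
  | cons a s ih =>
    simp only [Multiset.map_cons, Multiset.sum_cons, Multiset.card_cons, ih]
    push_cast
    ring

private lemma rep_lemma' (n : ℕ) (f : Polynomial ℝ) (hdeg : f.natDegree = n) (hn : 1 ≤ n)
    (hreal : ∀ z : ℂ, Polynomial.aeval z f = 0 → z.im = 0) :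
    ∃ s : Multiset ℝ, Multiset.card s = n ∧
      f = Polynomial.C f.leadingCoeff * (s.map fun r => X - Polynomial.C r).prod := by
  have hf0 : f ≠ 0 := fun h => by simp [h] at hdeg; omega
  set φ := algebraMap ℝ ℂ with hφ
  have hinj : Function.Injective φ := (algebraMap ℝ ℂ).injective
  set F := f.map φ with hF
  have hF0 : F ≠ 0 := (Polynomial.map_ne_zero_iff hinj).mpr hf0
  have hcard : Multiset.card F.roots = F.natDegree :=
    Polynomial.splits_iff_card_roots.mp (IsAlgClosed.splits F)
  have hrep := Polynomial.C_leadingCoeff_mul_prod_multiset_X_sub_C hcard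
  have hroots_real : ∀ z ∈ F.roots, z = ((z.re : ℝ) : ℂ) := by
    intro z hz
    have : Polynomial.aeval z f = 0 := by
      rw [Polynomial.aeval_def, ← Polynomial.eval_map]
      exact (Polynomial.isRoot_of_mem_roots hz)
    have him := hreal z this
    exact Complex.ext (by simp) (by simp [him])
  refine ⟨F.roots.map Complex.re, by rw [Multiset.card_map, hcard, hF, f.natDegree_map, hdeg], ?_⟩
  apply Polynomial.map_injective φ hinj
  rw [Polynomial.map_mul, Polynomial.map_C, ← Polynomial.leadingCoeff_map φ,
    Polynomial.map_multiset_prod, Multiset.map_map, Multiset.map_map, ← hF]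
  conv_lhs => rw [← hrep]
  congr 1
  congr 1
  apply Multiset.map_congr rfl
  intro z hz
  simp only [Function.comp_apply, Polynomial.map_sub, Polynomial.map_X, Polynomial.map_C]
  rw [show φ z.re = ((z.re : ℝ) : ℂ) from rfl, ← hroots_real z hz]

theorem stmt2 (n : ℕ) (hn : 2 ≤ n) (f : Polynomial ℝ) (hdeg : f.natDegree = n)
    (hreal : ∀ z : ℂ, Polynomial.aeval z f = 0 → z.im = 0) :
    (∃ a b : ℝ, a ≠ 0 ∧ f = Polynomial.C a * (Polynomial.X - Polynomial.C b) ^ n) ↔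
      (∃ c : ℝ, (Polynomial.derivative^[n - 2] f).eval c = 0 ∧
        (Polynomial.derivative^[n - 1] f).eval c = 0) := by
  obtain ⟨k, rfl⟩ : ∃ k, n = k + 2 := ⟨n - 2, by omega⟩
  have hk2 : k + 2 - 2 = k := by omega
  have hk1 : k + 2 - 1 = k + 1 := by omega
  rw [hk2, hk1]
  constructor
  · rintro ⟨a, b, ha, rfl⟩
    refine ⟨b, ?_, ?_⟩
    · rw [Polynomial.iterate_derivative_C_mul, Polynomial.iterate_derivative_X_sub_pow]
      simp [show k + 2 - k = 2 from by omega]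
    · rw [Polynomial.iterate_derivative_C_mul, Polynomial.iterate_derivative_X_sub_pow]
      simp [show k + 2 - (k + 1) = 1 from by omega]
  · rintro ⟨c, h1, h2⟩
    obtain ⟨s, hcard, hrep⟩ := rep_lemma' (k + 2) f hdeg (by omega) hreal
    have hf0 : f ≠ 0 := fun h => by simp [h] at hdeg
    set a := f.leadingCoeff with haa
    have ha : a ≠ 0 := Polynomial.leadingCoeff_ne_zero.mpr hf0
    -- coefficients of f
    have hck2 : f.coeff (k + 2) = a := by
      rw [← hdeg]; exact Polynomial.coeff_natDegree
    have hprod1 : (s.map fun r => X - Polynomial.C r).prod.coeff (k + 1) = -s.sum := by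
      have h := Multiset.prod_X_sub_C_coeff s (k := k + 1) (by rw [hcard]; omega)
      rw [hcard] at h
      simpa [esymm_one''] using h
    have hprod0 : (s.map fun r => X - Polynomial.C r).prod.coeff k = s.esymm 2 := by
      have h := Multiset.prod_X_sub_C_coeff s (k := k) (by rw [hcard]; omega)
      rw [hcard] at h
      simpa using h
    have hck1 : f.coeff (k + 1) = -a * s.sum := by
      rw [hrep, Polynomial.coeff_C_mul, hprod1]; ring
    have hck0 : f.coeff k = a * s.esymm 2 := by
      rw [hrep, Polynomial.coeff_C_mul, hprod0]
    -- eval of iterated derivatives via coefficients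
    have hdeg2 : (Polynomial.derivative^[k] f).natDegree < 3 := by
      have := Polynomial.natDegree_iterate_derivative f k
      omega
    have hdeg1 : (Polynomial.derivative^[k + 1] f).natDegree < 2 := by
      have := Polynomial.natDegree_iterate_derivative f (k + 1)
      omega
    rw [Polynomial.eval_eq_sum_range' hdeg2] at h1
    rw [Polynomial.eval_eq_sum_range' hdeg1] at h2
    simp only [Finset.sum_range_succ, Finset.sum_range_zero,
      Polynomial.coeff_iterate_derivative, nsmul_eq_mul, zero_add, pow_zero, pow_one,
      mul_one] at h1 h2
    rw [show 1 + k = k + 1 from by omega,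
      show 2 + k = k + 2 from by omega, hck0, hck1, hck2] at h1
    rw [show 1 + (k + 1) = k + 2 from by omega, hck1, hck2] at h2
    -- descFactorial values
    have hd0 : (k.descFactorial k : ℝ) = (k.factorial : ℝ) := by
      norm_cast; exact Nat.descFactorial_self k
    have hd1 : ((k + 1).descFactorial k : ℝ) = ((k : ℝ) + 1) * (k.factorial : ℝ) := by
      have h := Nat.factorial_mul_descFactorial (show k ≤ k + 1 by omega)
      simp only [Nat.add_sub_cancel_left, Nat.factorial_one, one_mul] at h
      rw [h]; push_cast [Nat.factorial_succ]; ring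
    have hd2 : 2 * ((k + 2).descFactorial k : ℝ) =
        ((k : ℝ) + 2) * ((k : ℝ) + 1) * (k.factorial : ℝ) := by
      have h := Nat.factorial_mul_descFactorial (show k ≤ k + 2 by omega)
      have h2' : (k + 2 - k) = 2 := by omega
      rw [h2'] at h
      have : 2 * (k + 2).descFactorial k = (k + 2).factorial := by
        rw [← h]; norm_num [Nat.factorial]
      calc 2 * ((k + 2).descFactorial k : ℝ) = ((k+2).factorial : ℝ) := by exact_mod_cast this
        _ = ((k : ℝ) + 2) * ((k : ℝ) + 1) * (k.factorial : ℝ) := by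
            push_cast [Nat.factorial_succ]; ring
    have he1 : ((k + 1).descFactorial (k + 1) : ℝ) = ((k : ℝ) + 1) * (k.factorial : ℝ) := by
      norm_cast
      rw [Nat.descFactorial_self]
      push_cast [Nat.factorial_succ]; ring
    have he2 : ((k + 2).descFactorial (k + 1) : ℝ) =
        ((k : ℝ) + 2) * ((k : ℝ) + 1) * (k.factorial : ℝ) := by
      have h := Nat.factorial_mul_descFactorial (show k + 1 ≤ k + 2 by omega)
      have h2' : (k + 2 - (k + 1)) = 1 := by omega
      rw [h2', Nat.factorial_one, one_mul] at h
      rw [h]; push_cast [Nat.factorial_succ]; ring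
    rw [hd0, hd1] at h1
    rw [he1, he2] at h2
    set S1 := s.sum with hS1
    set Q := (s.map (· ^ 2)).sum with hQ
    set E2 := s.esymm 2 with hE2
    have hfacne : (k.factorial : ℝ) ≠ 0 := by positivity
    -- from h2 : S1 = (k+2) * c
    have hS1c : S1 = ((k : ℝ) + 2) * c := by
      have hne : ((k : ℝ) + 1) * (k.factorial : ℝ) * a ≠ 0 :=
        mul_ne_zero (mul_ne_zero (by positivity) hfacne) ha
      have key : ((k : ℝ) + 1) * (k.factorial : ℝ) * a * (((k : ℝ) + 2) * c - S1) = 0 := by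
        linear_combination h2
      have := (mul_eq_zero.mp key).resolve_left hne
      linarith
    have hE2eq : 2 * E2 - 2 * ((k : ℝ) + 1) * S1 * c + ((k : ℝ) + 2) * ((k : ℝ) + 1) * c ^ 2 = 0 := by
      have hne : (k.factorial : ℝ) * a ≠ 0 := mul_ne_zero hfacne ha
      have key : (k.factorial : ℝ) * a *
          (2 * E2 - 2 * ((k : ℝ) + 1) * S1 * c + ((k : ℝ) + 2) * ((k : ℝ) + 1) * c ^ 2) = 0 := by
        linear_combination 2 * h1 - a * c ^ 2 * hd2
      exact (mul_eq_zero.mp key).resolve_left hne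
    have hsq := sq_sum_eq' s
    rw [← hS1, ← hQ, ← hE2] at hsq
    -- variance is zero
    have hvar : (s.map fun r => (r - c) ^ 2).sum = 0 := by
      rw [sum_sq_sub' s c, hcard, ← hS1, ← hQ]
      push_cast
      linear_combination -hsq - hE2eq + (S1 - ((k : ℝ) + 2) * c) * hS1c
    have hall : ∀ r ∈ s, r = c := by
      intro r hr
      have hmem : (r - c) ^ 2 ∈ s.map fun r => (r - c) ^ 2 := Multiset.mem_map_of_mem _ hr
      have hle := Multiset.single_le_sum (fun x hx => by
        obtain ⟨y, _, rfl⟩ := Multiset.mem_map.mp hx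
        positivity) _ hmem
      rw [hvar] at hle
      have : (r - c) ^ 2 = 0 := le_antisymm hle (sq_nonneg _)
      have := pow_eq_zero_iff (n := 2) (by omega) |>.mp this
      linarith [sub_eq_zero.mp this]
    have hsrep : s = Multiset.replicate (k + 2) c := by
      rw [← hcard]
      exact Multiset.eq_replicate_card.mpr hall
    refine ⟨a, c, ha, ?_⟩
    rw [hrep, hsrep, Multiset.map_replicate, Multiset.prod_replicate]
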